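/- For all ζ ∈ ℂ (with removable singularities filled in by the power-series values), the identity tanch(ζ/2) − 2 φ₁(ζ) Υ(ζ) = φ₂(ζ) holds, where tanch(ζ) = tanh(ζ)/ζ, φ₁(ζ) = (e^ζ − 1)/ζ, φ₂(ζ) = 2(e^ζ − 1 − ζ)/ζ², sinch(ζ) = sinh(ζ)/ζ, and Υ(ζ) = (1/sinch(ζ) − 1)/ζ. -/

import Mathlib

noncomputable section

/-- `tanch(ζ) = tanh(ζ)/ζ`, extended by its power-series value `1` at `ζ = 0`. -/
def tanch (z : ℂ) : ℂ := if z = 0 then 1 else Complex.tanh z / z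

/-- `φ₁(ζ) = (e^ζ − 1)/ζ`, extended by its power-series value `1` at `ζ = 0`. -/
def phi1 (z : ℂ) : ℂ := if z = 0 then 1 else (Complex.exp z - 1) / z

/-- `φ₂(ζ) = 2(e^ζ − 1 − ζ)/ζ²`, extended by its power-series value `1` at `ζ = 0`. -/
def phi2 (z : ℂ) : ℂ := if z = 0 then 1 else 2 * (Complex.exp z - 1 - z) / z ^ 2

/-- `sinch(ζ) = sinh(ζ)/ζ`, extended by its power-series value `1` at `ζ = 0`. -/
def sinch (z : ℂ) : ℂ := if z = 0 then 1 else Complex.sinh z / z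

/-- `Υ(ζ) = (1/sinch(ζ) − 1)/ζ`, extended by its power-series value `0` at `ζ = 0`. -/
def Upsilon (z : ℂ) : ℂ := if z = 0 then 0 else (1 / sinch z - 1) / z

/-- The identity `tanch(ζ/2) − 2 φ₁(ζ) Υ(ζ) = φ₂(ζ)` holds for all `ζ ∈ ℂ`
(at which the functions involved are defined, i.e. away from the poles of `tanh(ζ/2)` and of
`1/sinch(ζ)`; the removable singularities at `0` are filled in by the power-series values). -/
theorem stmt14 (z : ℂ) (h1 : Complex.cosh (z / 2) ≠ 0) (h2 : z = 0 ∨ Complex.sinh z ≠ 0) :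
    tanch (z / 2) - 2 * phi1 z * Upsilon z = phi2 z := by
  rcases h2 with hz | hs
  · subst hz
    simp [tanch, phi1, phi2, Upsilon]
  have hz : z ≠ 0 := fun h => hs (by simp [h])
  have hz2 : z / 2 ≠ 0 := by
    intro h; apply hz; field_simp at h; simpa using h
  set u := Complex.exp (z / 2) with hu
  have hu0 : u ≠ 0 := Complex.exp_ne_zero _
  have hexp : Complex.exp z = u ^ 2 := by
    rw [hu, ← Complex.exp_nat_mul]; ring_nf
  have hexpn : Complex.exp (-z) = (u ^ 2)⁻¹ := by
    rw [← hexp, Complex.exp_neg]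
  have hexpnh : Complex.exp (-(z / 2)) = u⁻¹ := by
    rw [hu, Complex.exp_neg]
  have hsinh : Complex.sinh z = (u ^ 2 - (u ^ 2)⁻¹) / 2 := by
    rw [Complex.sinh, hexp, hexpn]
  have hsinhh : Complex.sinh (z / 2) = (u - u⁻¹) / 2 := by
    rw [Complex.sinh, hexpnh]
  have hcoshh : Complex.cosh (z / 2) = (u + u⁻¹) / 2 := by
    rw [Complex.cosh, hexpnh]
  have hA : u ^ 2 + 1 ≠ 0 := by
    intro h; apply h1
    rw [hcoshh]; field_simp; linear_combination h
  have hB : u ^ 2 - 1 ≠ 0 := by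
    intro h; apply hs
    rw [hsinh]; field_simp; linear_combination (u^2 + 1) * h
  rw [tanch, phi1, phi2, Upsilon, sinch, if_neg hz2, if_neg hz, if_neg hz, if_neg hz,
    if_neg hz, Complex.tanh_eq_sinh_div_cosh, hsinhh, hcoshh, hsinh, hexp]
  have h1' : u + u⁻¹ ≠ 0 := by
    intro h; apply hA; field_simp at h; linear_combination h
  have hs' : u ^ 2 - (u ^ 2)⁻¹ ≠ 0 := by
    intro h; apply hB; field_simp at h
    rcases mul_eq_zero.1 (by linear_combination h : (u^2-1)*(u^2+1) = 0) with h' | h'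
    · exact h'
    · exact absurd h' hA
  have hC : u ^ 4 - 1 ≠ 0 := by
    intro h
    rcases mul_eq_zero.1 (by linear_combination h : (u^2-1)*(u^2+1) = 0) with h' | h'
    · exact hB h'
    · exact hA h'
  have hD : u ^ 2 * z + z ≠ 0 := by
    intro h; apply hA
    have := mul_eq_zero.1 (by linear_combination h : (u^2+1)*z = 0)
    tauto
  field_simp
  have hE : (u * u + 1) * z ≠ 0 :=
    mul_ne_zero (fun h => hA (by linear_combination h)) hz
  have hF : u ^ 2 * u ^ 2 - 1 ≠ 0 := fun h => hC (by linear_combination h)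
  field_simp
  ring
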